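/- Every graph admitting a mirror-decomposition has treewidth at most 2. -/

import Mathlib

/-- A tree-decomposition of `G`. -/
def IsTreeDecomp {V : Type*} {ι : Type} (G : SimpleGraph V) (T : SimpleGraph ι)
    (bag : ι → Set V) : Prop :=
  T.IsTree ∧
  (∀ v : V, ∃ i, v ∈ bag i) ∧
  (∀ ⦃u v : V⦄, G.Adj u v → ∃ i, u ∈ bag i ∧ v ∈ bag i) ∧
  (∀ v : V, (T.induce {i | v ∈ bag i}).Connected)

/-- The treewidth of `G`. -/
noncomputable def treewidth {V : Type*} (G : SimpleGraph V) : ℕ∞ :=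
  sInf {w : ℕ∞ | ∃ (ι : Type) (T : SimpleGraph ι) (bag : ι → Set V),
    IsTreeDecomp G T bag ∧ ∀ i, (bag i).encard ≤ w + 1}

open SimpleGraph

/-- The graph on `I` whose edges are exactly the pairs `{a, P a}` for `a ≠ r`. -/
def rootedGraph {I : Type} (r : I) (P : I → I) : SimpleGraph I where
  Adj a b := a ≠ b ∧ ((a ≠ r ∧ b = P a) ∨ (b ≠ r ∧ a = P b))
  symm := ⟨fun a b ⟨hne, h⟩ => ⟨hne.symm, h.symm⟩⟩
  loopless := ⟨fun a ⟨hne, _⟩ => hne rfl⟩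

lemma rootedGraph_isTree {I : Type} (r : I) (P : I → I) (d : I → ℕ)
    (h1 : ∀ a, a ≠ r → d (P a) < d a) : (rootedGraph r P).IsTree := by
  have hadj : ∀ a, a ≠ r → (rootedGraph r P).Adj a (P a) := by
    intro a ha
    refine ⟨fun h => absurd (h1 a ha) (by rw [← h]; exact lt_irrefl _), Or.inl ⟨ha, rfl⟩⟩
  have key : ∀ n a, d a ≤ n → (rootedGraph r P).Reachable a r := by
    intro n
    induction n with
    | zero =>
      intro a h
      by_cases ha : a = r
      · subst ha; exact Reachable.refl _
      · exact absurd (h1 a ha) (by omega)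
    | succ n ih =>
      intro a h
      by_cases ha : a = r
      · subst ha; exact Reachable.refl _
      · exact ((hadj a ha).reachable).trans (ih (P a) (by have := h1 a ha; omega))
  haveI : Nonempty I := ⟨r⟩
  constructor
  · exact SimpleGraph.Connected.mk (fun a b => (key _ a le_rfl).trans (key _ b le_rfl).symm)
  · intro v c hc
    classical
    have hv : v ∈ c.support := c.start_mem_support
    obtain ⟨m, hmmem, hmax⟩ := c.support.toFinset.exists_max_image d ⟨v, List.mem_toFinset.2 hv⟩
    replace hmmem : m ∈ c.support := List.mem_toFinset.1 hmmem
    have hmax' : ∀ y ∈ c.support, d y ≤ d m := fun y hy => hmax y (List.mem_toFinset.2 hy)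
    set c' := c.rotate m hmmem with hc'def
    have hc' : c'.IsCycle := hc.rotate hmmem
    have hsup : ∀ y, y ∈ c'.support → d y ≤ d m := by
      intro y hy
      rw [Walk.support_eq_cons] at hy
      rcases List.mem_cons.1 hy with rfl | hy
      · exact le_rfl
      · exact hmax' y (List.mem_of_mem_tail
          (((Walk.support_rotate c m hmmem).perm.mem_iff).1 hy))
    have hpar : ∀ y, (rootedGraph r P).Adj m y → y ∈ c'.support → y = P m := by
      intro y hadjy hymem
      rcases hadjy.2 with ⟨_, hy⟩ | ⟨hy, hm'⟩
      · exact hy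
      · exact absurd (hm' ▸ h1 y hy) (not_lt.2 (hsup y hymem))
    have hnn : ¬ c'.Nil := hc'.not_nil
    obtain ⟨a, ha, q, hq⟩ := Walk.not_nil_iff.1 hnn
    have hnnr : ¬ c'.reverse.Nil := by
      rw [Walk.not_nil_iff_lt_length, Walk.length_reverse]
      exact Walk.not_nil_iff_lt_length.1 hnn
    obtain ⟨b, hb, q2, hq2⟩ := Walk.not_nil_iff.1 hnnr
    have hamem : a ∈ c'.support := by
      rw [hq]; simp [Walk.support_cons]
    have hbmem : b ∈ c'.support := by
      have : b ∈ c'.reverse.support := by rw [hq2]; simp [Walk.support_cons]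
      rwa [Walk.support_reverse, List.mem_reverse] at this
    have ha' : a = P m := hpar a ha hamem
    have hb' : b = P m := hpar b hb hbmem
    have hab : a = b := ha'.trans hb'.symm
    subst hab
    have hedges : c'.edges = s(m, a) :: q.edges := by rw [hq]; rfl
    have hedgesr : c'.edges.reverse = s(m, a) :: q2.edges := by
      rw [← Walk.edges_reverse, hq2]; rfl
    have hnodup : c'.edges.Nodup := hc'.isTrail.edges_nodup
    have hlen : 3 ≤ c'.length := hc'.three_le_length
    have hlen' : 3 ≤ c'.edges.length := by rwa [Walk.length_edges]
    have hrev : c'.edges = q2.edges.reverse ++ [s(m, a)] := by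
      have := congrArg List.reverse hedgesr
      simpa using this
    rw [hedges] at hrev hnodup hlen'
    rcases hq2rev : q2.edges.reverse with _ | ⟨x, t⟩
    · rw [hq2rev] at hrev; simp at hrev
      simp [Walk.nil_iff_length_eq.1 hrev] at hlen'
    · rw [hq2rev] at hrev
      have hx : s(m, a) = x := by
        have := congrArg (fun l => l.head?) hrev
        simpa using this
      have ht : q.edges = t ++ [s(m, a)] := by
        have := congrArg (fun l => l.tail) hrev
        simpa using this
      have : s(m, a) ∈ q.edges := by rw [ht]; simp
      exact (List.nodup_cons.1 hnodup).1 this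


lemma exists_parent {α : Type*} {G : SimpleGraph α} (hG : G.IsTree) (r : α) :
    ∃ (p : α → α) (depth : α → ℕ), p r = r ∧ depth r = 0 ∧
      (∀ x, x ≠ r → G.Adj x (p x) ∧ depth (p x) < depth x) ∧
      (∀ u v, G.Adj u v → p u = v ∨ p v = u) := by
  classical
  have hup := hG.existsUnique_path
  let W : ∀ x, G.Walk x r := fun x => (hup x r).choose
  have hW : ∀ x, (W x).IsPath := fun x => (hup x r).choose_spec.1
  have hWu : ∀ x (q : G.Walk x r), q.IsPath → q = W x := fun x q hq =>
    (hup x r).choose_spec.2 q hq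
  have hWr : (Walk.nil : G.Walk r r) = W r := hWu r Walk.nil Walk.IsPath.nil
  refine ⟨fun x => (W x).getVert 1, fun x => (W x).length, ?_, ?_, ?_, ?_⟩
  · show (W r).getVert 1 = r
    rw [← hWr]
    exact Walk.getVert_of_length_le _ (by simp)
  · show (W r).length = 0
    rw [← hWr]; rfl
  · intro x hx
    show G.Adj x ((W x).getVert 1) ∧ (W ((W x).getVert 1)).length < (W x).length
    obtain ⟨y, h, q, hq⟩ := Walk.exists_eq_cons_of_ne hx (W x)
    have hq' : q.IsPath := by
      have := hW x; rw [hq] at this; exact this.of_cons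
    have hWy : q = W y := hWu y q hq'
    have hgv : (W x).getVert 1 = y := by
      rw [hq]; exact (Walk.getVert_cons_succ q h).trans (Walk.getVert_zero _)
    rw [hgv]
    refine ⟨h, ?_⟩
    rw [← hWy]
    rw [hq, Walk.length_cons]
    omega
  · intro u v huv
    by_cases hv : v ∈ (W u).support
    · left
      show (W u).getVert 1 = v
      have h1 : ((W u).takeUntil v hv).IsPath := (hW u).takeUntil hv
      have h2 : (Walk.cons huv Walk.nil).IsPath := by
        refine Walk.IsPath.nil.cons ?_
        simp [huv.ne]
      have h12 : (W u).takeUntil v hv = Walk.cons huv Walk.nil := (hup u v).unique h1 h2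
      have hts := (W u).take_spec hv
      rw [h12] at hts
      rw [← hts, Walk.cons_append]
      exact (Walk.getVert_cons_succ _ huv).trans (Walk.getVert_zero _)
    · right
      show (W v).getVert 1 = u
      have h2 : (Walk.cons huv.symm (W u)).IsPath := (hW u).cons hv
      rw [← hWu v _ h2]
      exact (Walk.getVert_cons_succ _ huv.symm).trans (Walk.getVert_zero _)

lemma encard_triple_le {V : Type*} (a b c : V) : ({a, b, c} : Set V).encard ≤ 3 :=
  calc ({a, b, c} : Set V).encard ≤ ({b, c} : Set V).encard + 1 := Set.encard_insert_le _ _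
    _ ≤ (({c} : Set V).encard + 1) + 1 :=
        add_le_add_left (Set.encard_insert_le _ _) 1
    _ = 3 := by rw [Set.encard_singleton]; rfl

/-- Every graph admitting a mirror-decomposition (`H = T ∪ T'` with `T`, `T'`
trees having no common internal vertices, together with an isomorphism
`ι : T ≃ T'` fixing every common vertex) has treewidth at most `2`. -/
theorem treewidth_le_two_of_mirror_decomposition {V : Type*} [Finite V]
    (H : SimpleGraph V) (T T' : H.Subgraph)
    (ht : T.coe.IsTree) (ht' : T'.coe.IsTree)
    (hverts : T.verts ∪ T'.verts = Set.univ)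
    (hedges : ∀ ⦃u v : V⦄, H.Adj u v → T.Adj u v ∨ T'.Adj u v)
    (hint : ∀ v, v ∈ T.verts → v ∈ T'.verts →
      ¬ (2 ≤ (T.neighborSet v).ncard ∧ 2 ≤ (T'.neighborSet v).ncard))
    (ι : T.coe ≃g T'.coe)
    (hfix : ∀ (v : V) (hv : v ∈ T.verts) (hv' : v ∈ T'.verts),
      ((ι ⟨v, hv⟩ : T'.verts) : V) = v) :
    treewidth H ≤ 2 := by
  classical
  haveI hne : Nonempty T.verts := ht.isConnected.nonempty
  let r : T.verts := Classical.arbitrary _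
  obtain ⟨p, depth, hpr, hdr, hstep, hpar⟩ := exists_parent ht r
  obtain ⟨n, ⟨e⟩⟩ := Finite.exists_equiv_fin (↥T.verts × Bool)
  let P2 : ↥T.verts × Bool → ↥T.verts × Bool := fun i =>
    match i with
    | (x, false) => (x, true)
    | (x, true) => (p x, false)
  let d2 : ↥T.verts × Bool → ℕ := fun i =>
    match i with
    | (x, false) => 2 * depth x
    | (x, true) => if x = r then 1 else 2 * depth x - 1
  let r3 : Fin n := e (r, false)
  let P3 : Fin n → Fin n := fun i => e (P2 (e.symm i))
  let d3 : Fin n → ℕ := fun i => d2 (e.symm i)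
  let B : ↥T.verts × Bool → Set V := fun i =>
    match i with
    | (x, false) => {↑x, ↑(p x), ↑(ι x)}
    | (x, true) => {↑(p x), ↑(ι x), ↑(ι (p x))}
  let bag : Fin n → Set V := fun i => B (e.symm i)
  -- the decomposition graph
  set G3 := rootedGraph r3 P3 with hG3
  have htree : G3.IsTree := by
    refine rootedGraph_isTree r3 P3 d3 ?_
    intro a ha
    obtain ⟨⟨x, b⟩, rfl⟩ := e.surjective a
    have hxb : (x, b) ≠ (r, false) := fun h => ha (by rw [hG3] at *; exact congrArg e h)
    have h3 : d3 (P3 (e (x, b))) = d2 (P2 (x, b)) := by simp [d3, P3]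
    have h4 : d3 (e (x, b)) = d2 (x, b) := by simp [d3]
    rw [h3, h4]
    cases b with
    | false =>
      have hx : x ≠ r := fun h => hxb (by rw [h])
      have h5 := (hstep x hx).2
      show (if x = r then 1 else 2 * depth x - 1) < 2 * depth x
      rw [if_neg hx]
      omega
    | true =>
      show 2 * depth (p x) < if x = r then 1 else 2 * depth x - 1
      by_cases hx : x = r
      · rw [if_pos hx, hx, hpr, hdr]; norm_num
      · rw [if_neg hx]
        have h5 := (hstep x hx).2
        omega
  -- adjacency helpers
  have adjA : ∀ x : T.verts, G3.Adj (e (x, false)) (e (x, true)) := by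
    intro x
    by_cases hx : x = r
    · subst hx
      refine ⟨fun h => by simpa using e.injective h, Or.inr ⟨fun h => by simpa using e.injective h, ?_⟩⟩
      show e (r, false) = e (P2 (e.symm (e (r, true))))
      simp [P2, hpr]
    · refine ⟨fun h => by simpa using e.injective h, Or.inl ⟨?_, ?_⟩⟩
      · intro h
        exact hx (congrArg Prod.fst (e.injective h))
      · show e (x, true) = e (P2 (e.symm (e (x, false))))
        simp [P2]
  have adjB : ∀ x : T.verts, G3.Adj (e (x, true)) (e (p x, false)) := by
    intro x
    refine ⟨fun h => by simpa using e.injective h, Or.inl ⟨?_, ?_⟩⟩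
    · intro h
      exact Bool.noConfusion (congrArg Prod.snd (e.injective h))
    · show e (p x, false) = e (P2 (e.symm (e (x, true))))
      simp [P2]
  -- membership helpers
  have memB : ∀ (v : V) (i : ↥T.verts × Bool), v ∈ bag (e i) ↔ v ∈ B i := by
    intro v i; simp [bag]
  have hfix' : ∀ (x : T.verts) (v : V) (hv : v ∈ T.verts), (↑(ι x) : V) = v → x = ⟨v, hv⟩ := by
    intro x v hv h
    have h1 : ι x = ι ⟨v, hv⟩ := by
      apply Subtype.ext
      rw [h, hfix v hv (by rw [← h]; exact (ι x).2)]
    exact ι.injective h1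
  -- the treewidth bound
  rw [treewidth]
  refine sInf_le ?_
  refine ⟨Fin n, G3, bag, ⟨htree, ?_, ?_, ?_⟩, ?_⟩
  · -- vertex coverage
    intro v
    have hv : v ∈ T.verts ∪ T'.verts := hverts.symm ▸ Set.mem_univ v
    rcases hv with hv | hv
    · exact ⟨e (⟨v, hv⟩, false), (memB v _).2 (Or.inl rfl)⟩
    · refine ⟨e (ι.symm ⟨v, hv⟩, false), (memB v _).2 (Or.inr (Or.inr ?_))⟩
      show v ∈ {(↑(ι (ι.symm ⟨v, hv⟩)) : V)}
      simp
  · -- edge coverage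
    intro u v huv
    rcases hedges huv with h | h
    · have hu := h.fst_mem
      have hv := h.snd_mem
      have hcoe : T.coe.Adj ⟨u, hu⟩ ⟨v, hv⟩ := h
      rcases hpar _ _ hcoe with h1 | h1
      · refine ⟨e (⟨u, hu⟩, false), (memB u _).2 (Or.inl rfl), (memB v _).2 (Or.inr (Or.inl ?_))⟩
        rw [h1]
      · refine ⟨e (⟨v, hv⟩, false), (memB u _).2 (Or.inr (Or.inl ?_)), (memB v _).2 (Or.inl rfl)⟩
        rw [h1]
    · have hu := h.fst_mem
      have hv := h.snd_mem
      have hcoe : T'.coe.Adj ⟨u, hu⟩ ⟨v, hv⟩ := h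
      have hadj : T.coe.Adj (ι.symm ⟨u, hu⟩) (ι.symm ⟨v, hv⟩) := by
        have := ι.symm.map_adj_iff (v := (⟨u, hu⟩ : T'.verts)) (w := (⟨v, hv⟩ : T'.verts))
        exact this.mpr hcoe
      rcases hpar _ _ hadj with h1 | h1
      · refine ⟨e (ι.symm ⟨u, hu⟩, true), (memB u _).2 (Or.inr (Or.inl ?_)),
          (memB v _).2 (Or.inr (Or.inr ?_))⟩
        · simp
        · rw [h1]; show v ∈ {(↑(ι (ι.symm ⟨v, hv⟩)) : V)}; simp
      · refine ⟨e (ι.symm ⟨v, hv⟩, true), (memB u _).2 (Or.inr (Or.inr ?_)),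
          (memB v _).2 (Or.inr (Or.inl ?_))⟩
        · rw [h1]; show u ∈ {(↑(ι (ι.symm ⟨u, hu⟩)) : V)}; simp
        · simp
  · -- connectivity
    intro v
    set S : Set (Fin n) := {i | v ∈ bag i} with hS
    have step : ∀ (i j : Fin n) (hi : i ∈ S) (hj : j ∈ S), G3.Adj i j →
        (G3.induce S).Reachable ⟨i, hi⟩ ⟨j, hj⟩ := by
      intro i j hi hj h
      exact SimpleGraph.Adj.reachable (by exact h)
    have hv : v ∈ T.verts ∪ T'.verts := hverts.symm ▸ Set.mem_univ v
    rcases Classical.em (v ∈ T.verts) with hvT | hvT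
    · -- hub is (⟨v⟩, false)
      set hub : Fin n := e (⟨v, hvT⟩, false) with hhubdef
      have hhub : hub ∈ S := (memB v _).2 (Or.inl rfl)
      have claim : ∀ (i : Fin n) (hi : i ∈ S), (G3.induce S).Reachable ⟨i, hi⟩ ⟨hub, hhub⟩ := by
        intro i hi
        obtain ⟨⟨x, b⟩, rfl⟩ := e.surjective i
        have hi' : v ∈ B (x, b) := (memB v _).1 hi
        cases b with
        | false =>
          rcases hi' with h | h | h
          · have : x = ⟨v, hvT⟩ := Subtype.ext h.symm
            subst this
            rfl
          · have hpx : p x = ⟨v, hvT⟩ := Subtype.ext h.symm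
            have hmid : e (x, true) ∈ S := (memB v _).2 (Or.inl h)
            refine (step _ _ hi hmid (adjA x)).trans ?_
            have := adjB x
            rw [hpx] at this
            exact step _ _ hmid hhub this
          · have : x = ⟨v, hvT⟩ := hfix' x v hvT h.symm
            subst this
            rfl
        | true =>
          rcases hi' with h | h | h
          · have hpx : p x = ⟨v, hvT⟩ := Subtype.ext h.symm
            have := adjB x
            rw [hpx] at this
            exact step _ _ hi hhub this
          · have : x = ⟨v, hvT⟩ := hfix' x v hvT h.symm
            subst this
            exact step _ _ hi hhub (adjA _).symm
          · have hpx : p x = ⟨v, hvT⟩ := hfix' (p x) v hvT h.symm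
            have := adjB x
            rw [hpx] at this
            exact step _ _ hi hhub this
      refine SimpleGraph.Connected.mk ?_ (nonempty := ⟨⟨hub, hhub⟩⟩)
      rintro ⟨i, hi⟩ ⟨j, hj⟩
      exact (claim i hi).trans (claim j hj).symm
    · have hvT' : v ∈ T'.verts := by
        rcases hv with h | h
        · exact absurd h hvT
        · exact h
      set w : T.verts := ι.symm ⟨v, hvT'⟩ with hwdef
      have hιw : (↑(ι w) : V) = v := by
        show (↑(ι (ι.symm ⟨v, hvT'⟩)) : V) = v
        simp
      set hub : Fin n := e (w, false) with hhubdef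
      have hhub : hub ∈ S := (memB v _).2 (Or.inr (Or.inr (by rw [← hιw]; rfl)))
      have hιinj : ∀ x : T.verts, (↑(ι x) : V) = v → x = w := by
        intro x h
        have : ι x = ⟨v, hvT'⟩ := Subtype.ext h
        rw [hwdef, ← this]
        simp
      have claim : ∀ (i : Fin n) (hi : i ∈ S), (G3.induce S).Reachable ⟨i, hi⟩ ⟨hub, hhub⟩ := by
        intro i hi
        obtain ⟨⟨x, b⟩, rfl⟩ := e.surjective i
        have hi' : v ∈ B (x, b) := (memB v _).1 hi
        cases b with
        | false =>
          rcases hi' with h | h | h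
          · exact absurd (h ▸ x.2) hvT
          · exact absurd (h ▸ (p x).2) hvT
          · have : x = w := hιinj x h.symm
            subst this
            rfl
        | true =>
          rcases hi' with h | h | h
          · exact absurd (h ▸ (p x).2) hvT
          · have : x = w := hιinj x h.symm
            subst this
            exact step _ _ hi hhub (adjA _).symm
          · have hpx : p x = w := hιinj (p x) h.symm
            have := adjB x
            rw [hpx] at this
            exact step _ _ hi hhub this
      refine SimpleGraph.Connected.mk ?_ (nonempty := ⟨⟨hub, hhub⟩⟩)
      rintro ⟨i, hi⟩ ⟨j, hj⟩
      exact (claim i hi).trans (claim j hj).symm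
  · -- bag sizes
    intro i
    show (B (e.symm i)).encard ≤ 2 + 1
    obtain ⟨x, b⟩ := e.symm i
    cases b with
    | false => exact le_trans (encard_triple_le _ _ _) (by norm_num)
    | true => exact le_trans (encard_triple_le _ _ _) (by norm_num)
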